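/- On a simple tropical curve C, the only exact 1-form that is also holomorphic (i.e., has all residues zero) is the zero form: Ω₀(C) ∩ Ω_H(C) = {0}. -/

import Mathlib

open Finset

section GraphSetup

variable {V D : Type} [Fintype V] [Fintype D] [DecidableEq V] [DecidableEq D]

/-- A loop in a graph given by darts: a nonempty cyclic chain of darts, injective on
(unoriented) edges.  `rev` is orientation reversal and `tail` the initial vertex of
a dart; the head of `d` is `tail (rev d)`. -/
def IsLoop (rev : D → D) (tail : D → V) (c : List D) : Prop :=
  c ≠ [] ∧ c.Nodup ∧ (∀ d ∈ c, rev d ∉ c) ∧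
    c.Chain' (fun d d' => tail (rev d) = tail d') ∧
    ∀ a ∈ c.head?, ∀ b ∈ c.getLast?, tail (rev b) = tail a

/-- The integral of a 1-form `ω` along a loop `c`: `Σ l(e)·ω(e⃗)`. -/
def loopIntegral (len : D → ℝ) (ω : D → ℝ) (c : List D) : ℝ :=
  (c.map fun d => len d * ω d).sum

/-- A 1-form on the graph: antisymmetric under orientation reversal and satisfying
the Kirchhoff balancing condition at every internal (non-leaf) vertex. -/
def IsBalanced (rev : D → D) (tail : D → V) (isLeaf : V → Prop) [DecidablePred isLeaf]
    (ω : D → ℝ) : Prop :=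
  (∀ d, ω (rev d) = - ω d) ∧
    ∀ v, ¬ isLeaf v → ∑ d ∈ univ.filter (fun d => tail d = v), ω d = 0

/-- A 1-form is exact if its integral over every loop vanishes. -/
def IsExact (rev : D → D) (tail : D → V) (len : D → ℝ) (ω : D → ℝ) : Prop :=
  ∀ c : List D, IsLoop rev tail c → loopIntegral len ω c = 0

/-- A 1-form is holomorphic if its residues (its values on leaf edges) all vanish. -/
def IsHolomorphic (tail : D → V) (isLeaf : V → Prop) (ω : D → ℝ) : Prop :=
  ∀ d, isLeaf (tail d) → ω d = 0

/-- Connectivity of the graph: any two vertices are joined by a chain of darts. -/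
def GraphConnected (rev : D → D) (tail : D → V) : Prop :=
  ∀ v w : V, Relation.ReflTransGen (fun x y => ∃ d, tail d = x ∧ tail (rev d) = y) v w

end GraphSetup
set_option linter.unusedSectionVars false
set_option maxHeartbeats 1000000

section Aux
variable {V D : Type} [Fintype V] [Fintype D] [DecidableEq V] [DecidableEq D]
variable (rev : D → D) (tail : D → V)

/-- A closed walk: chain of darts whose last head equals first tail. -/
def CWalk (c : List D) : Prop :=
  c.Chain' (fun d d' => tail (rev d) = tail d') ∧
    ∀ a ∈ c.head?, ∀ b ∈ c.getLast?, tail (rev b) = tail a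

lemma head?_append_left {a : List D} (b : List D) (ha : a ≠ []) :
    (a ++ b).head? = a.head? := by
  cases a with
  | nil => exact absurd rfl ha
  | cons x xs => rfl

lemma getLast?_append_right (a : List D) {b : List D} (hb : b ≠ []) :
    (a ++ b).getLast? = b.getLast? := by
  rw [List.getLast?_append]
  obtain ⟨x, hx⟩ := Option.isSome_iff_exists.mp (List.getLast?_isSome.mpr hb)
  rw [hx]; rfl

lemma cwalk_rotate {a b : List D} (h : CWalk rev tail (a ++ b)) :
    CWalk rev tail (b ++ a) := by
  rcases eq_or_ne a [] with rfl | ha0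
  · simpa using h
  rcases eq_or_ne b [] with rfl | hb0
  · simpa using h
  obtain ⟨hc, hend⟩ := h
  rw [List.Chain', List.isChain_append] at hc
  obtain ⟨hca, hcb, hab⟩ := hc
  refine ⟨List.isChain_append.mpr ⟨hcb, hca, ?_⟩, ?_⟩
  · intro x hx y hy
    apply hend
    · rwa [head?_append_left _ ha0]
    · rwa [getLast?_append_right _ hb0]
  · intro x hx y hy
    rw [head?_append_left _ hb0] at hx
    rw [getLast?_append_right _ ha0] at hy
    exact hab y hy x hx

lemma cwalk_split_dup {d : D} {e f : List D}
    (h : CWalk rev tail (d :: (e ++ d :: f))) :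
    CWalk rev tail (d :: e) ∧ CWalk rev tail (d :: f) := by
  obtain ⟨hc, hend⟩ := h
  rw [List.Chain', List.isChain_cons, List.isChain_append] at hc
  obtain ⟨hhead, hce, hcdf, hlink⟩ := hc
  constructor
  · refine ⟨List.isChain_cons.mpr ⟨?_, hce⟩, ?_⟩
    · intro b hb
      apply hhead
      cases e with
      | nil => simp_all
      | cons x xs => simpa using hb
    · intro a ha b hb
      simp only [List.head?_cons, Option.mem_def, Option.some_inj] at ha
      subst ha
      cases e with
      | nil =>
        simp only [List.getLast?_singleton, Option.mem_def, Option.some_inj] at hb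
        subst hb
        exact hhead d (by simp)
      | cons x xs =>
        have hb' : b ∈ (x :: xs).getLast? := by
          simpa [List.getLast?_cons_cons] using hb
        exact hlink b hb' d (by simp)
  · refine ⟨hcdf, ?_⟩
    intro a ha b hb
    simp only [List.head?_cons, Option.mem_def, Option.some_inj] at ha
    subst ha
    apply hend d (by simp)
    have heq : (d :: (e ++ d :: f)) = (d :: e) ++ (d :: f) := by simp
    rw [heq, getLast?_append_right _ (by simp : (d :: f) ≠ [])]
    exact hb

lemma cwalk_split_rev (hrev : ∀ d, rev (rev d) = d) {d : D} {e f : List D}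
    (h : CWalk rev tail (d :: (e ++ rev d :: f))) :
    CWalk rev tail e ∧ CWalk rev tail f := by
  obtain ⟨hc, hend⟩ := h
  rw [List.Chain', List.isChain_cons, List.isChain_append, List.isChain_cons] at hc
  obtain ⟨hhead, hce, ⟨hfhead, hcf⟩, hlink⟩ := hc
  constructor
  · refine ⟨hce, ?_⟩
    intro a ha b hb
    have h1 : tail (rev d) = tail a := by
      apply hhead
      cases e with
      | nil => simp at ha
      | cons x xs =>
        simp only [List.head?_cons, Option.mem_def, Option.some_inj] at ha
        simp [ha]
    have h2 : tail (rev b) = tail (rev d) := hlink b hb (rev d) (by simp)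
    rw [h2, h1]
  · refine ⟨hcf, ?_⟩
    intro a ha b hb
    have h1 : tail d = tail a := by
      have := hfhead a ha
      rwa [hrev d] at this
    have h2 : tail (rev b) = tail d := by
      apply hend d (by simp)
      have heq : (d :: (e ++ rev d :: f)) = (d :: e ++ [rev d]) ++ f := by simp
      rw [heq, getLast?_append_right]
      · exact hb
      · intro hf; rw [hf] at hb; simp at hb
    rw [h2, h1]

end Aux

section Main
variable {V D : Type} [Fintype V] [Fintype D] [DecidableEq V] [DecidableEq D]
variable (rev : D → D) (tail : D → V) (len : D → ℝ) (ω : D → ℝ)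

lemma cwalk_integral_zero (hrev : ∀ d, rev (rev d) = d) (hrevne : ∀ d, rev d ≠ d)
    (hω : ∀ d, ω (rev d) = - ω d) (hlensym : ∀ d, len (rev d) = len d)
    (he : ∀ c : List D, (c ≠ [] ∧ c.Nodup ∧ (∀ d ∈ c, rev d ∉ c) ∧
      c.Chain' (fun d d' => tail (rev d) = tail d') ∧
      ∀ a ∈ c.head?, ∀ b ∈ c.getLast?, tail (rev b) = tail a) → loopIntegral len ω c = 0) :
    ∀ c : List D, CWalk rev tail c → loopIntegral len ω c = 0 := by
  suffices H : ∀ n (c : List D), c.length = n → CWalk rev tail c →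
      loopIntegral len ω c = 0 from fun c hc => H _ c rfl hc
  intro n
  induction n using Nat.strong_induction_on with
  | _ n ih =>
    intro c hn hcw
    rcases eq_or_ne c [] with rfl | hc0
    · simp [loopIntegral]
    by_cases hloop : c.Nodup ∧ ∀ d ∈ c, rev d ∉ c
    · exact he c ⟨hc0, hloop.1, hloop.2, hcw.1, hcw.2⟩
    by_cases hnd : c.Nodup
    · -- must contain d and rev d
      have hex : ∃ d ∈ c, rev d ∈ c := by
        by_contra hne
        push_neg at hne
        exact hloop ⟨hnd, hne⟩
      obtain ⟨d, hd, hrd⟩ := hex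
      obtain ⟨a, b, rfl⟩ := List.append_of_mem hd
      have hcw' : CWalk rev tail ((d :: b) ++ a) := cwalk_rotate rev tail hcw
      have hrd' : rev d ∈ b ++ a := by
        rcases List.mem_append.mp hrd with h | h
        · exact List.mem_append.mpr (Or.inr h)
        · rcases List.mem_cons.mp h with h | h
          · exact absurd h (hrevne d)
          · exact List.mem_append.mpr (Or.inl h)
      obtain ⟨e, f, hef⟩ := List.append_of_mem hrd'
      have hc'' : CWalk rev tail (d :: (e ++ rev d :: f)) := by
        rwa [show (d :: b) ++ a = d :: (b ++ a) from rfl, hef] at hcw'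
      obtain ⟨hcwe, hcwf⟩ := cwalk_split_rev rev tail hrev hc''
      have hlen : b.length + a.length = e.length + f.length + 1 := by
        have := congrArg List.length hef
        simp only [List.length_append, List.length_cons] at this
        omega
      have hn' : n = e.length + f.length + 2 := by
        have h1 : (a ++ d :: b).length = n := hn
        simp only [List.length_append, List.length_cons] at h1
        omega
      have hIe : loopIntegral len ω e = 0 := ih e.length (by omega) e rfl hcwe
      have hIf : loopIntegral len ω f = 0 := ih f.length (by omega) f rfl hcwf
      have : loopIntegral len ω (a ++ d :: b) =
          loopIntegral len ω (d :: (e ++ rev d :: f)) := by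
        have : loopIntegral len ω (a ++ d :: b) = loopIntegral len ω ((d :: b) ++ a) := by
          simp [loopIntegral]; ring
        rw [this, show (d :: b) ++ a = d :: (b ++ a) from rfl, hef]
      rw [this]
      simp [loopIntegral] at hIe hIf ⊢
      rw [hω, hlensym]
      rw [hIe, hIf]
      ring
    · -- duplicate dart
      have hex : ∃ d, 2 ≤ c.count d := by
        by_contra hne
        push_neg at hne
        exact hnd (List.nodup_iff_count_le_one.mpr fun d => by have := hne d; omega)
      obtain ⟨d, hd2⟩ := hex
      have hd : d ∈ c := by
        rw [← List.count_pos_iff]; omega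
      obtain ⟨a, b, rfl⟩ := List.append_of_mem hd
      have hd' : d ∈ b ++ a := by
        have := hd2
        rw [List.count_append, List.count_cons_self] at this
        rw [List.mem_append, ← List.count_pos_iff, ← List.count_pos_iff]
        omega
      obtain ⟨e, f, hef⟩ := List.append_of_mem hd'
      have hcw' : CWalk rev tail ((d :: b) ++ a) := cwalk_rotate rev tail hcw
      have hc'' : CWalk rev tail (d :: (e ++ d :: f)) := by
        rwa [show (d :: b) ++ a = d :: (b ++ a) from rfl, hef] at hcw'
      obtain ⟨hcwe, hcwf⟩ := cwalk_split_dup rev tail hc''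
      have hn' : n = e.length + f.length + 2 := by
        have h1 : (a ++ d :: b).length = n := hn
        have h2 := congrArg List.length hef
        simp only [List.length_append, List.length_cons] at h1 h2
        omega
      have hIe : loopIntegral len ω (d :: e) = 0 :=
        ih (d :: e).length (by simp; omega) _ rfl hcwe
      have hIf : loopIntegral len ω (d :: f) = 0 :=
        ih (d :: f).length (by simp; omega) _ rfl hcwf
      have heq : loopIntegral len ω (a ++ d :: b) =
          loopIntegral len ω (d :: (e ++ d :: f)) := by
        have : loopIntegral len ω (a ++ d :: b) = loopIntegral len ω ((d :: b) ++ a) := by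
          simp [loopIntegral]; ring
        rw [this, show (d :: b) ++ a = d :: (b ++ a) from rfl, hef]
      rw [heq]
      simp [loopIntegral] at hIe hIf ⊢
      linarith

end Main

section Walks
variable {V D : Type} [Fintype V] [Fintype D] [DecidableEq V] [DecidableEq D]
variable (rev : D → D) (tail : D → V) (len : D → ℝ) (ω : D → ℝ)

def Walk (v w : V) (c : List D) : Prop :=
  c.Chain' (fun d d' => tail (rev d) = tail d') ∧ (∀ a ∈ c.head?, tail a = v) ∧
    (∀ b ∈ c.getLast?, tail (rev b) = w) ∧ (c = [] → v = w)

lemma walk_exists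
    (hconn : ∀ v w : V,
      Relation.ReflTransGen (fun x y => ∃ d, tail d = x ∧ tail (rev d) = y) v w)
    (v w : V) : ∃ c, Walk rev tail v w c := by
  have h := hconn v w
  induction h with
  | refl => exact ⟨[], by simp [Walk, List.Chain']⟩
  | tail h1 h2 ih =>
    obtain ⟨c, hch, hhd, hlast, hnil⟩ := ih
    obtain ⟨d, hd1, hd2⟩ := h2
    refine ⟨c ++ [d], ?_, ?_, ?_, by simp⟩
    · rw [List.Chain', List.isChain_append]
      refine ⟨hch, List.isChain_singleton _, ?_⟩
      intro x hx y hy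
      simp only [List.head?_cons, Option.mem_def, Option.some_inj] at hy
      subst hy
      rw [hlast x hx, hd1]
    · intro a ha
      cases c with
      | nil =>
        simp only [List.nil_append, List.head?_cons, Option.mem_def, Option.some_inj] at ha
        subst ha; rw [hd1, hnil rfl]
      | cons x xs =>
        rw [head?_append_left _ (by simp)] at ha
        exact hhd a ha
    · intro b hb
      rw [getLast?_append_right _ (by simp)] at hb
      simp only [List.getLast?_singleton, Option.mem_def, Option.some_inj] at hb
      subst hb; exact hd2

lemma walk_append {v w u : V} {c₁ c₂ : List D} (h₁ : Walk rev tail v w c₁)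
    (h₂ : Walk rev tail w u c₂) : Walk rev tail v u (c₁ ++ c₂) := by
  obtain ⟨hch₁, hhd₁, hlast₁, hnil₁⟩ := h₁
  obtain ⟨hch₂, hhd₂, hlast₂, hnil₂⟩ := h₂
  rcases eq_or_ne c₁ [] with rfl | h10
  · rw [hnil₁ rfl]; exact ⟨hch₂, hhd₂, hlast₂, hnil₂⟩
  rcases eq_or_ne c₂ [] with rfl | h20
  · rw [← hnil₂ rfl]; simpa using ⟨hch₁, hhd₁, hlast₁, hnil₁⟩
  refine ⟨?_, ?_, ?_, by simp [h10]⟩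
  · rw [List.Chain', List.isChain_append]
    refine ⟨hch₁, hch₂, ?_⟩
    intro x hx y hy
    rw [hlast₁ x hx, hhd₂ y hy]
  · intro a ha
    rw [head?_append_left _ h10] at ha
    exact hhd₁ a ha
  · intro b hb
    rw [getLast?_append_right _ h20] at hb
    exact hlast₂ b hb

lemma walk_reverse (hrev : ∀ d, rev (rev d) = d) {v w : V} {c : List D}
    (h : Walk rev tail v w c) : Walk rev tail w v ((c.map rev).reverse) := by
  obtain ⟨hch, hhd, hlast, hnil⟩ := h
  refine ⟨?_, ?_, ?_, ?_⟩
  · rw [List.Chain', List.isChain_reverse, List.isChain_map]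
    refine hch.imp ?_
    intro a b hab
    show tail (rev (rev b)) = tail (rev a)
    rw [hrev]
    exact hab.symm
  · intro a ha
    rw [List.head?_reverse, List.getLast?_map] at ha
    obtain ⟨b, hb, rfl⟩ := Option.map_eq_some_iff.mp ha
    exact hlast b hb
  · intro b hb
    rw [List.getLast?_reverse, List.head?_map] at hb
    obtain ⟨a, ha, rfl⟩ := Option.map_eq_some_iff.mp hb
    rw [hrev]
    exact hhd a ha
  · intro hc
    simp only [List.reverse_eq_nil_iff, List.map_eq_nil_iff] at hc
    exact (hnil hc).symm

lemma integral_reverse (hω : ∀ d, ω (rev d) = - ω d) (hlensym : ∀ d, len (rev d) = len d)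
    (c : List D) : loopIntegral len ω ((c.map rev).reverse) = - loopIntegral len ω c := by
  unfold loopIntegral
  rw [List.map_reverse, List.sum_reverse, List.map_map]
  induction c with
  | nil => simp
  | cons x xs ih =>
    simp only [List.map_cons, List.sum_cons, Function.comp_apply, hω, hlensym] at ih ⊢
    rw [ih]; ring

lemma walk_cwalk {v : V} {c : List D} (h : Walk rev tail v v c) : CWalk rev tail c := by
  obtain ⟨hch, hhd, hlast, _⟩ := h
  exact ⟨hch, fun a ha b hb => by rw [hlast b hb, hhd a ha]⟩

end Walks

section Fin
variable {V D : Type} [Fintype V] [Fintype D] [DecidableEq V] [DecidableEq D]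

lemma integral_append (len ω : D → ℝ) (a b : List D) :
    loopIntegral len ω (a ++ b) = loopIntegral len ω a + loopIntegral len ω b := by
  simp [loopIntegral]

theorem stmt6' (rev : D → D) (tail : D → V) (isLeaf : V → Prop) [DecidablePred isLeaf]
    (len : D → ℝ)
    (hrev : ∀ d, rev (rev d) = d) (hrevne : ∀ d, rev d ≠ d)
    (hconn : ∀ v w : V,
      Relation.ReflTransGen (fun x y => ∃ d, tail d = x ∧ tail (rev d) = y) v w)
    (hlen : ∀ d, 0 < len d) (hlensym : ∀ d, len (rev d) = len d)
    (ω : D → ℝ)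
    (hanti : ∀ d, ω (rev d) = - ω d)
    (hbal : ∀ v, ¬ isLeaf v → ∑ d ∈ univ.filter (fun d => tail d = v), ω d = 0)
    (he : ∀ c : List D, (c ≠ [] ∧ c.Nodup ∧ (∀ d ∈ c, rev d ∉ c) ∧
      c.Chain' (fun d d' => tail (rev d) = tail d') ∧
      ∀ a ∈ c.head?, ∀ b ∈ c.getLast?, tail (rev b) = tail a) → loopIntegral len ω c = 0)
    (hh : ∀ d, isLeaf (tail d) → ω d = 0) :
    ω = 0 := by
  have hzero : ∀ c, CWalk rev tail c → loopIntegral len ω c = 0 :=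
    cwalk_integral_zero rev tail len ω hrev hrevne hanti hlensym he
  have key : ∀ v, ∑ d ∈ univ.filter (fun d => tail d = v), ω d = 0 := by
    intro v
    by_cases hv : isLeaf v
    · apply Finset.sum_eq_zero
      intro d hd
      rw [Finset.mem_filter] at hd
      exact hh d (hd.2 ▸ hv)
    · exact hbal v hv
  rcases isEmpty_or_nonempty D with hD | hD
  · funext d; exact (hD.false d).elim
  obtain ⟨d₀⟩ := hD
  have hex : ∀ v, ∃ c, Walk rev tail (tail d₀) v c := walk_exists rev tail hconn (tail d₀)
  choose wlk hwlk using hex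
  set f : V → ℝ := fun v => loopIntegral len ω (wlk v) with hf
  have huniq : ∀ v (c : List D), Walk rev tail (tail d₀) v c →
      loopIntegral len ω c = f v := by
    intro v c hc
    have hrevw := walk_reverse rev tail hrev (hwlk v)
    have hcw := walk_cwalk rev tail (walk_append rev tail hc hrevw)
    have h0 := hzero _ hcw
    rw [integral_append, integral_reverse rev len ω hanti hlensym] at h0
    have : loopIntegral len ω (wlk v) = f v := rfl
    linarith [h0, this]
  have grad : ∀ d : D, f (tail (rev d)) = f (tail d) + len d * ω d := by
    intro d
    have hwd : Walk rev tail (tail d) (tail (rev d)) [d] :=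
      ⟨List.isChain_singleton _, by simp, by simp, by simp⟩
    have h1 := huniq (tail (rev d)) (wlk (tail d) ++ [d])
      (walk_append rev tail (hwlk (tail d)) hwd)
    rw [integral_append] at h1
    have h2 : loopIntegral len ω (wlk (tail d)) = f (tail d) := rfl
    have h3 : loopIntegral len ω [d] = len d * ω d := by simp [loopIntegral]
    linarith
  have hS : ∑ d : D, ω d * f (tail d) = 0 := by
    rw [← Finset.sum_fiberwise univ tail (fun d => ω d * f (tail d))]
    apply Finset.sum_eq_zero
    intro v _
    calc ∑ d ∈ univ.filter (fun d => tail d = v), ω d * f (tail d)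
        = ∑ d ∈ univ.filter (fun d => tail d = v), ω d * f v :=
          Finset.sum_congr rfl (fun d hd => by rw [(Finset.mem_filter.mp hd).2])
      _ = (∑ d ∈ univ.filter (fun d => tail d = v), ω d) * f v := by
          rw [Finset.sum_mul]
      _ = 0 := by rw [key v, zero_mul]
  have hS' : ∑ d : D, ω d * f (tail (rev d)) = 0 := by
    have hinv : Function.Involutive rev := hrev
    have hcomp := Equiv.sum_comp hinv.toPerm (fun d => ω d * f (tail (rev d)))
    simp only [Function.Involutive.coe_toPerm] at hcomp
    rw [← hcomp]
    have : ∀ d : D, ω (rev d) * f (tail (rev (rev d))) = -(ω d * f (tail d)) := by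
      intro d; rw [hrev, hanti]; ring
    rw [Finset.sum_congr rfl (fun d _ => this d), Finset.sum_neg_distrib, hS, neg_zero]
  have hE : ∑ d : D, len d * ω d ^ 2 = 0 := by
    have hterm : ∀ d : D, len d * ω d ^ 2 = ω d * f (tail (rev d)) - ω d * f (tail d) := by
      intro d; rw [grad d]; ring
    rw [Finset.sum_congr rfl (fun d _ => hterm d), Finset.sum_sub_distrib, hS, hS']
    ring
  funext d
  have h1 : ∀ d ∈ (univ : Finset D), 0 ≤ len d * ω d ^ 2 :=
    fun d _ => mul_nonneg (hlen d).le (sq_nonneg _)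
  have h2 := (Finset.sum_eq_zero_iff_of_nonneg h1).mp hE d (mem_univ d)
  have h3 : ω d ^ 2 = 0 := by
    rcases mul_eq_zero.mp h2 with h | h
    · exact absurd h (hlen d).ne'
    · exact h
  have := pow_eq_zero_iff (n := 2) (by norm_num) |>.mp h3
  simpa using this
end Fin

/-- On a simple tropical curve, the only exact 1-form that is also holomorphic
(all residues zero) is the zero form: `Ω₀(C) ∩ Ω_H(C) = {0}`. -/
theorem stmt6 {V D : Type} [Fintype V] [Fintype D] [DecidableEq V] [DecidableEq D]
    (rev : D → D) (tail : D → V) (isLeaf : V → Prop) [DecidablePred isLeaf]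
    (len : D → ℝ)
    (hrev : ∀ d, rev (rev d) = d) (hrevne : ∀ d, rev d ≠ d)
    (hconn : GraphConnected rev tail)
    (hleaf : ∀ v, isLeaf v ↔ (univ.filter fun d => tail d = v).card = 1)
    (htri : ∀ v, ¬ isLeaf v → (univ.filter fun d => tail d = v).card = 3)
    (hlen : ∀ d, 0 < len d) (hlensym : ∀ d, len (rev d) = len d)
    (ω : D → ℝ)
    (hb : IsBalanced rev tail isLeaf ω)
    (he : IsExact rev tail len ω)
    (hh : IsHolomorphic tail isLeaf ω) :
    ω = 0 := by
  obtain ⟨hanti, hbal⟩ := hb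
  exact stmt6' rev tail isLeaf len hrev hrevne hconn hlen hlensym ω hanti hbal
    (fun c hc => he c hc) hh
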